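/- Let G be a finite simple graph, let K_n be the complete graph on n vertices, and let G□K_n denote their Cartesian (box) product. Then for all complex λ, μ: F_{G□K_n}(λ,μ) = F_G(λ + (n−1)(μ−1), μ) · F_G(λ + (n−1)μ + 1, μ)^{n−1}. -/

import Mathlib

open Matrix BigOperators Kronecker
open scoped Classical

noncomputable section

variable {α β : Type*}

def adjM [Fintype α] (G : SimpleGraph α) : Matrix α α ℂ :=
  Matrix.of fun u v => if G.Adj u v then (1 : ℂ) else 0

def degM [Fintype α] (G : SimpleGraph α) : Matrix α α ℂ :=
  Matrix.diagonal fun v => ((G.neighborSet v).ncard : ℂ)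

def Fpoly [Fintype α] (G : SimpleGraph α) (lam mu : ℂ) : ℂ :=
  (lam • (1 : Matrix α α ℂ) - (adjM G - mu • degM G)).det

def permM (γ : Equiv.Perm β) : Matrix β β ℂ :=
  Matrix.of fun v w => if γ v = w then (1 : ℂ) else 0

def voltM [Fintype α] (G : SimpleGraph α) (φ : α → α → Equiv.Perm β) (γ : Equiv.Perm β) :
    Matrix α α ℂ :=
  Matrix.of fun u₁ u₂ => if G.Adj u₁ u₂ ∧ φ u₁ u₂ = γ then (1 : ℂ) else 0

def autPerm (F : SimpleGraph β) : Subgroup (Equiv.Perm β) where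
  carrier := {γ | ∀ a b, F.Adj (γ a) (γ b) ↔ F.Adj a b}
  one_mem' := by intro a b; simp
  mul_mem' := by intro γ δ hγ hδ a b; simp [Equiv.Perm.mul_apply, hγ _ _, hδ _ _]
  inv_mem' := by intro γ hγ a b; simpa using (hγ (γ⁻¹ a) (γ⁻¹ b)).symm

def bundle (G : SimpleGraph α) (F : SimpleGraph β) (φ : α → α → Equiv.Perm β)
    (hsym : ∀ u₁ u₂, G.Adj u₁ u₂ → φ u₂ u₁ = (φ u₁ u₂)⁻¹) : SimpleGraph (β × α) where
  Adj p q := (G.Adj p.2 q.2 ∧ q.1 = φ p.2 q.2 p.1) ∨ (p.2 = q.2 ∧ F.Adj p.1 q.1)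
  symm := by
    constructor
    rintro ⟨v₁, u₁⟩ ⟨v₂, u₂⟩ hadj
    dsimp only at hadj ⊢
    rcases hadj with ⟨h, rfl⟩ | ⟨rfl, h⟩
    · left
      refine ⟨h.symm, ?_⟩
      rw [hsym _ _ h]
      simp
    · right
      exact ⟨rfl, h.symm⟩
  loopless := by
    constructor
    rintro ⟨v, u⟩ hadj
    dsimp only at hadj
    rcases hadj with ⟨h, _⟩ | ⟨_, h⟩
    · exact G.loopless.irrefl u h
    · exact F.loopless.irrefl v h

def dsum [Fintype α] (B : β → Matrix α α ℂ) : Matrix (β × α) (β × α) ℂ :=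
  Matrix.of fun p q => if p.1 = q.1 then B p.1 p.2 q.2 else 0

def bigE {ℓ : ℕ} {f m : Fin ℓ → ℕ} (e : β ≃ Σ i : Fin ℓ, Fin (m i) × Fin (f i)) (α : Type*) :
    β × α ≃ Σ i : Fin ℓ, Fin (m i) × (Fin (f i) × α) :=
  (e.prodCongr (Equiv.refl α)).trans
    ((Equiv.sigmaProdDistrib _ _).trans (Equiv.sigmaCongrRight fun _ => Equiv.prodAssoc _ _ _))



set_option maxHeartbeats 1000000 in
lemma ncard_neighborSet_eq_degree {α : Type*} [Fintype α] (G : SimpleGraph α) (v : α) :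
    (G.neighborSet v).ncard = G.degree v := by
  rw [Set.ncard_eq_toFinset_card']; congr 1

set_option maxHeartbeats 1000000 in
theorem genCharPoly_of_boxProd_completeGraph
    {α : Type*} [Fintype α] (G : SimpleGraph α)
    (n : ℕ) (hn : 1 ≤ n) (lam μ : ℂ) :
    Fpoly (G.boxProd (⊤ : SimpleGraph (Fin n))) lam μ
      = Fpoly G (lam + ((n : ℂ) - 1) * (μ - 1)) μ *
          (Fpoly G (lam + ((n : ℂ) - 1) * μ + 1) μ) ^ (n - 1) := by
  obtain ⟨m, rfl⟩ : ∃ m, n = m + 1 := ⟨n - 1, (Nat.succ_pred_eq_of_pos hn).symm⟩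
  unfold Fpoly
  set nC : ℂ := ((m + 1 : ℕ) : ℂ) with hnC
  have hnz : nC ≠ 0 := Nat.cast_ne_zero.mpr (Nat.succ_ne_zero m)
  have hnz1 : ((m : ℂ) + 1) ≠ 0 := Nat.cast_add_one_ne_zero m
  have hnz2 : (1 : ℂ) + (m : ℂ) ≠ 0 := by rw [add_comm]; exact hnz1
  set C : Matrix α α ℂ := (lam + μ * (nC - 1) + 1) • 1 - (adjM G - μ • degM G) with hC
  set J : Matrix (Fin (m + 1)) (Fin (m + 1)) ℂ := Matrix.of fun _ _ => 1 with hJ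
  set d : Fin (m + 1) → ℂ := fun i => if i = 0 then nC else 0 with hd
  set P : Matrix (Fin (m + 1)) (Fin (m + 1)) ℂ :=
    Matrix.of fun i k => (if k = 0 then 1 else 0) + (if i = 0 then 1 else 0)
      - (if i = k then 1 else 0) with hP
  set Q : Matrix (Fin (m + 1)) (Fin (m + 1)) ℂ :=
    Matrix.of fun k j => nC⁻¹ - (if k = j ∧ ¬ j = 0 then 1 else 0) with hQ
  -- P * Q = 1
  have hPQ : P * Q = 1 := by
    ext i j
    rw [Matrix.mul_apply]
    simp only [hP, hQ, Matrix.of_apply, ite_and, sub_mul, add_mul, ite_mul, one_mul, zero_mul,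
      mul_sub, mul_ite, mul_one, mul_zero, Finset.sum_sub_distrib, Finset.sum_add_distrib,
      Finset.sum_ite_eq, Finset.sum_ite_eq', Finset.mem_univ, if_true, Finset.sum_const,
      Finset.card_univ, Fintype.card_fin, nsmul_eq_mul, Matrix.one_apply]
    rcases eq_or_ne i 0 with hi | hi <;> rcases eq_or_ne j 0 with hj | hj <;>
      rcases eq_or_ne i j with hij | hij <;>
      first | (simp [*, eq_comm]; try field_simp; try ring) | skip
  have hQP : Q * P = 1 := mul_eq_one_comm.mp hPQ
  -- J * P = P * diagonal d
  have hJP : J * P = P * Matrix.diagonal d := by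
    ext i j
    rw [Matrix.mul_apply, Matrix.mul_apply]
    simp only [hJ, hP, hd, Matrix.of_apply, Matrix.diagonal_apply, one_mul,
      mul_ite, mul_zero, mul_one, ite_mul, zero_mul, one_mul,
      Finset.sum_add_distrib, Finset.sum_sub_distrib, Finset.sum_ite_eq, Finset.sum_ite_eq',
      Finset.mem_univ, if_true, Finset.sum_const, Finset.card_univ, Fintype.card_fin,
      nsmul_eq_mul]
    rcases eq_or_ne i 0 with hi | hi <;> rcases eq_or_ne j 0 with hj | hj <;>
      rcases eq_or_ne i j with hij | hij <;>
      first | (simp [*, eq_comm]; try field_simp; try ring) | skip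
  have hQJP : Q * J * P = Matrix.diagonal d := by
    rw [Matrix.mul_assoc, hJP, ← Matrix.mul_assoc, hQP, Matrix.one_mul]
  have hconj : ((1 : Matrix α α ℂ) ⊗ₖ Q) * (C ⊗ₖ (1 : Matrix (Fin (m + 1)) (Fin (m + 1)) ℂ)
        - (1 : Matrix α α ℂ) ⊗ₖ J) * ((1 : Matrix α α ℂ) ⊗ₖ P)
      = C ⊗ₖ (1 : Matrix (Fin (m + 1)) (Fin (m + 1)) ℂ)
        - (1 : Matrix α α ℂ) ⊗ₖ Matrix.diagonal d := by
    rw [Matrix.mul_sub, Matrix.sub_mul, ← Matrix.mul_kronecker_mul, ← Matrix.mul_kronecker_mul,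
      ← Matrix.mul_kronecker_mul, ← Matrix.mul_kronecker_mul]
    simp only [Matrix.one_mul, Matrix.mul_one]
    rw [hQP, hQJP]
  have hblock : C ⊗ₖ (1 : Matrix (Fin (m + 1)) (Fin (m + 1)) ℂ)
        - (1 : Matrix α α ℂ) ⊗ₖ Matrix.diagonal d
      = Matrix.blockDiagonal (fun i => C - d i • 1) := by
    ext ⟨u, i⟩ ⟨v, j⟩
    simp only [Matrix.sub_apply, Matrix.kroneckerMap_apply, Matrix.one_apply,
      Matrix.diagonal_apply, Matrix.blockDiagonal_apply, Matrix.smul_apply, smul_eq_mul]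
    rcases eq_or_ne i j with hij | hij <;> rcases eq_or_ne u v with huv | huv <;>
      simp [hij, huv] <;> ring
  have hdetPQ : Matrix.det ((1 : Matrix α α ℂ) ⊗ₖ Q) * Matrix.det ((1 : Matrix α α ℂ) ⊗ₖ P)
      = 1 := by
    rw [← Matrix.det_mul, ← Matrix.mul_kronecker_mul, Matrix.one_mul, hQP,
      Matrix.one_kronecker_one, Matrix.det_one]
  have hsc1 : lam + μ * (nC - 1) + 1 - nC = lam + (((m + 1 : ℕ) : ℂ) - 1) * (μ - 1) := by
    rw [hnC]; push_cast; ring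
  have hsc2 : lam + μ * (nC - 1) + 1 = lam + (((m + 1 : ℕ) : ℂ) - 1) * μ + 1 := by
    rw [hnC]; push_cast; ring
  have hC1 : C - nC • (1 : Matrix α α ℂ)
      = (lam + (((m + 1 : ℕ) : ℂ) - 1) * (μ - 1)) • 1 - (adjM G - μ • degM G) := by
    rw [hC, sub_right_comm, ← sub_smul, hsc1]
  have hC2 : C = (lam + (((m + 1 : ℕ) : ℂ) - 1) * μ + 1) • 1 - (adjM G - μ • degM G) := by
    rw [hC, hsc2]
  rw [← hC1, ← hC2, Nat.add_sub_cancel]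
  have h2 : (C ⊗ₖ (1 : Matrix (Fin (m + 1)) (Fin (m + 1)) ℂ) - (1 : Matrix α α ℂ) ⊗ₖ J).det
      = (C - nC • 1).det * C.det ^ m := by
    calc (C ⊗ₖ (1 : Matrix (Fin (m + 1)) (Fin (m + 1)) ℂ) - (1 : Matrix α α ℂ) ⊗ₖ J).det
        = (((1 : Matrix α α ℂ) ⊗ₖ Q) * (C ⊗ₖ (1 : Matrix (Fin (m + 1)) (Fin (m + 1)) ℂ)
            - (1 : Matrix α α ℂ) ⊗ₖ J) * ((1 : Matrix α α ℂ) ⊗ₖ P)).det := by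
          rw [Matrix.det_mul, Matrix.det_mul, mul_right_comm, hdetPQ, one_mul]
      _ = (C - nC • 1).det * C.det ^ m := by
          rw [hconj, hblock, Matrix.det_blockDiagonal, Fin.prod_univ_succ]
          simp only [hd, Fin.succ_ne_zero, if_false, if_pos rfl, zero_smul, sub_zero,
            Finset.prod_const, Finset.card_univ, Fintype.card_fin]
  rw [← h2]
  congr 1
  have hdeg : ∀ (u : α) (i : Fin (m + 1)),
      (((G.boxProd (⊤ : SimpleGraph (Fin (m + 1)))).neighborSet (u, i)).ncard : ℂ)
        = ((G.neighborSet u).ncard : ℂ) + (nC - 1) := by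
    intro u i
    have hset : (G.boxProd (⊤ : SimpleGraph (Fin (m + 1)))).neighborSet (u, i)
        = (G.neighborSet u) ×ˢ {i} ∪ {u} ×ˢ ((⊤ : SimpleGraph (Fin (m + 1))).neighborSet i) :=
      SimpleGraph.neighborSet_boxProd _
    have htop : ((⊤ : SimpleGraph (Fin (m + 1))).neighborSet i) = {i}ᶜ := by
      ext j; simp [eq_comm, ne_comm]
    have hcompl : ({i}ᶜ : Set (Fin (m + 1))).ncard = m := by
      have h1 := Set.ncard_add_ncard_compl ({i} : Set (Fin (m + 1)))
        (Set.toFinite _) (Set.toFinite _)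
      simp only [Nat.card_eq_fintype_card, Fintype.card_fin, Set.ncard_singleton] at h1
      omega
    have hdisj : Disjoint ((G.neighborSet u) ×ˢ ({i} : Set (Fin (m + 1))))
        (({u} : Set α) ×ˢ ((⊤ : SimpleGraph (Fin (m + 1))).neighborSet i)) := by
      rw [htop]
      rw [Set.disjoint_left]
      rintro ⟨a, b⟩ ⟨ha, hb⟩ ⟨ha', hb'⟩
      simp only [Set.mem_singleton_iff, Set.mem_compl_iff] at hb hb'
      exact hb' hb
    rw [hset, Set.ncard_union_eq hdisj (Set.toFinite _) (Set.toFinite _), htop,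
      Set.prod_singleton, Set.singleton_prod,
      Set.ncard_image_of_injective _ (fun a b h => by simpa using h),
      Set.ncard_image_of_injective _ (fun a b h => by simpa using h), hcompl]
    rw [hnC]
    push_cast
    ring
  ext ⟨u, i⟩ ⟨v, j⟩
  simp only [Matrix.sub_apply, Matrix.smul_apply, Matrix.one_apply, adjM, degM, hC, hJ,
    Matrix.of_apply, Matrix.kroneckerMap_apply, Matrix.diagonal_apply, SimpleGraph.boxProd_adj,
    SimpleGraph.top_adj, Prod.mk.injEq, smul_eq_mul]
  rw [show ((((G.boxProd (⊤ : SimpleGraph (Fin (m+1)))).neighborSet (u, i)).ncard : ℂ)) = _ from hdeg u i]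
  rcases eq_or_ne u v with huv | huv <;> rcases eq_or_ne i j with hij | hij <;>
    by_cases hadj : G.Adj u v <;>
    simp [huv, hij, hadj, SimpleGraph.irrefl] <;> ring


end
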